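/- Let β > 0. For every solution of the delayed Cucker–Smale system, all indices i, j and all t ≥ 2τ, one has |x_j(t−τ) − x_i(t−σ)| ≤ |x_j(τ) − x_i(2τ−σ)| + ∫_{2τ}^{t} ( G(s−τ) + β^{−1} e^{2τ} G(s−σ) + ∫_{s−τ}^{s−σ} G(r−τ) dr ) ds. -/

import Mathlib

open scoped BigOperators
open MeasureTheory

/-- Diameter of a configuration `w` at time `t` (used for positions and velocities). -/
noncomputable def csDiam {N d : ℕ} (w : Fin N → ℝ → EuclideanSpace ℝ (Fin d)) (t : ℝ) : ℝ :=
  ⨆ i : Fin N, ⨆ j : Fin N, ‖w i t - w j t‖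

/-- Maximum of the norms of `w' i t` over the agents `i`. -/
noncomputable def csMaxDer {N d : ℕ} (w' : Fin N → ℝ → EuclideanSpace ℝ (Fin d)) (t : ℝ) : ℝ :=
  ⨆ i : Fin N, ‖w' i t‖

/-- Lyapunov–Krasovskii functional
`G(t) = d_v(t) + β ∫_{max(0,t-2τ)}^t e^{-(t-s)} ∫_s^t max_i |v̇_i(r)| dr ds`. -/
noncomputable def csG {N d : ℕ} (β τ : ℝ)
    (v v' : Fin N → ℝ → EuclideanSpace ℝ (Fin d)) (t : ℝ) : ℝ :=
  csDiam v t +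
    β * ∫ s in (max 0 (t - 2 * τ))..t, Real.exp (-(t - s)) * ∫ r in s..t, csMaxDer v' r

/-- Minimal communication rate `a̲(t) = min_{i ≠ j} ψ(|x_i(t-σ) - x_j(t-τ)|)/(N-1)`. -/
noncomputable def csAMin {N d : ℕ} (ψ : ℝ → ℝ) (σ τ : ℝ)
    (x : Fin N → ℝ → EuclideanSpace ℝ (Fin d)) (t : ℝ) : ℝ :=
  ⨅ p : {p : Fin N × Fin N // p.1 ≠ p.2},
    ψ ‖x p.val.1 (t - σ) - x p.val.2 (t - τ)‖ / (N - 1)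

section helpers
open Set intervalIntegral
variable {E : Type*} [NormedAddCommGroup E]

lemma my_intInt_congr {f g : ℝ → E} {a b : ℝ}
    (h : Set.EqOn f g (Set.uIoc a b)) (hg : IntervalIntegrable g volume a b) :
    IntervalIntegrable f volume a b := by
  rw [intervalIntegrable_iff] at hg ⊢
  exact (hg.congr_fun (fun u hu => (h hu).symm) measurableSet_uIoc)

lemma my_int_congr {f g : ℝ → E} [NormedSpace ℝ E] {a b : ℝ}
    (h : Set.EqOn f g (Set.uIoc a b)) :
    ∫ u in a..b, f u = ∫ u in a..b, g u :=
  intervalIntegral.integral_congr_ae (Filter.Eventually.of_forall (fun u hu => h hu))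

lemma my_iSup_cont {N : ℕ} [Nonempty (Fin N)] {f : Fin N → ℝ → ℝ} {s : Set ℝ}
    (h : ∀ i, ContinuousOn (f i) s) :
    ContinuousOn (fun t => ⨆ i, f i t) s := by
  have e : ∀ t, (⨆ i, f i t) = Finset.univ.sup' Finset.univ_nonempty (fun i => f i t) :=
    fun t => (Finset.sup'_univ_eq_ciSup _).symm
  simp only [e]
  exact ContinuousOn.finset_sup'_apply Finset.univ_nonempty (fun i _ => h i)

lemma my_le_iSup {N : ℕ} (f : Fin N → ℝ) (i : Fin N) : f i ≤ ⨆ k, f k :=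
  le_ciSup (Set.finite_range f).bddAbove i

lemma my_integral_nonneg_mono_set {f : ℝ → ℝ} {a b c d : ℝ} (hca : c ≤ a) (hab : a ≤ b)
    (hbd : b ≤ d) (hf : ∀ x ∈ Icc c d, 0 ≤ f x) (hint : IntervalIntegrable f volume c d) :
    ∫ x in a..b, f x ≤ ∫ x in c..d, f x := by
  have h1 : IntervalIntegrable f volume c a :=
    hint.mono_set (by
      rw [uIcc_of_le hca, uIcc_of_le (hca.trans (hab.trans hbd))]
      exact Icc_subset_Icc le_rfl (hab.trans hbd))
  have h2 : IntervalIntegrable f volume a b :=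
    hint.mono_set (by
      rw [uIcc_of_le hab, uIcc_of_le (hca.trans (hab.trans hbd))]
      exact Icc_subset_Icc hca hbd)
  have h3 : IntervalIntegrable f volume b d :=
    hint.mono_set (by
      rw [uIcc_of_le hbd, uIcc_of_le (hca.trans (hab.trans hbd))]
      exact Icc_subset_Icc (hca.trans hab) le_rfl)
  have e1 : (∫ x in c..a, f x) + (∫ x in a..b, f x) + (∫ x in b..d, f x) = ∫ x in c..d, f x := by
    rw [integral_add_adjacent_intervals h1 h2, integral_add_adjacent_intervals (h1.trans h2) h3]
  have n1 : 0 ≤ ∫ x in c..a, f x :=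
    intervalIntegral.integral_nonneg hca (fun x hx => hf x ⟨hx.1, hx.2.trans (hab.trans hbd)⟩)
  have n3 : 0 ≤ ∫ x in b..d, f x :=
    intervalIntegral.integral_nonneg hbd (fun x hx => hf x ⟨(hca.trans hab).trans hx.1, hx.2⟩)
  linarith

end helpers

set_option maxHeartbeats 1000000 in
theorem stmt_15
    (N d : ℕ) (hN : 2 ≤ N) (hd : 1 ≤ d)
    (σ τ : ℝ) (hσ : 0 ≤ σ) (hστ : σ ≤ τ) (hτ : 0 < τ)
    (β : ℝ) (hβ : 0 < β)
    (ψ : ℝ → ℝ)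
    (hψpos : ∀ s, 0 ≤ s → 0 < ψ s)
    (hψcont : ContinuousOn ψ (Set.Ici 0))
    (hψmono : ∀ s t, 0 ≤ s → s ≤ t → ψ t ≤ ψ s)
    (hψbdd : ∀ s, 0 ≤ s → ψ s ≤ 1)
    (x v v' : Fin N → ℝ → EuclideanSpace ℝ (Fin d))
    (hxc : ∀ i, ContinuousOn (x i) (Set.Ici (-τ)))
    (hvc : ∀ i, ContinuousOn (v i) (Set.Ici (-τ)))
    (hxder : ∀ i, ∀ t, -τ < t → HasDerivAt (x i) (v i t) t)
    (hvder : ∀ i, ∀ t > (0:ℝ), HasDerivAt (v i) (v' i t) t)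
    (hode : ∀ i, ∀ t > (0:ℝ),
      v' i t = ∑ j ∈ Finset.univ.erase i,
        (ψ ‖x i (t - σ) - x j (t - τ)‖ / (N - 1)) • (v j (t - τ) - v i (t - σ))) :
    ∀ (i j : Fin N), ∀ t, 2 * τ ≤ t →
      ‖x j (t - τ) - x i (t - σ)‖ ≤ ‖x j τ - x i (2 * τ - σ)‖
        + ∫ s in (2 * τ)..t,
            (csG β τ v v' (s - τ) + β⁻¹ * Real.exp (2 * τ) * csG β τ v v' (s - σ)
              + ∫ r in (s - τ)..(s - σ), csG β τ v v' (r - τ)) := by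
  intro i j t ht
  haveI hNe : Nonempty (Fin N) := ⟨⟨0, by omega⟩⟩
  have hN1 : (1:ℝ) ≤ (N:ℝ) - 1 := by
    have h2 : (2:ℝ) ≤ (N:ℝ) := by exact_mod_cast hN
    linarith
  -- continuous representative of the derivative
  set F : Fin N → ℝ → EuclideanSpace ℝ (Fin d) := fun k u =>
    ∑ l ∈ Finset.univ.erase k,
      (ψ ‖x k (u - σ) - x l (u - τ)‖ / (N - 1)) • (v l (u - τ) - v k (u - σ)) with hF
  have hFv : ∀ k : Fin N, ∀ u : ℝ, 0 < u → v' k u = F k u := by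
    intro k u hu
    rw [hode k u hu, hF]
  have hshift : ∀ c : ℝ, c ≤ τ → Set.MapsTo (fun u : ℝ => u - c) (Set.Ici (0:ℝ)) (Set.Ici (-τ)) := by
    intro c hc u hu
    simp only [Set.mem_Ici] at hu ⊢
    linarith
  have hFc : ∀ k, ContinuousOn (F k) (Set.Ici (0:ℝ)) := by
    intro k
    rw [hF]
    apply continuousOn_finset_sum
    intro l _
    apply ContinuousOn.fun_smul
    · apply ContinuousOn.div_const
      apply hψcont.comp
      · exact (((hxc k).comp ((continuous_id.sub continuous_const).continuousOn)
          (hshift σ hστ)).sub ((hxc l).comp ((continuous_id.sub continuous_const).continuousOn)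
          (hshift τ le_rfl))).norm
      · intro u _
        exact norm_nonneg _
    · exact ((hvc l).comp ((continuous_id.sub continuous_const).continuousOn)
        (hshift τ le_rfl)).sub ((hvc k).comp ((continuous_id.sub continuous_const).continuousOn)
        (hshift σ hστ))
  set Dg : ℝ → ℝ := fun u => ⨆ k, ‖F k u‖ with hDg
  have hDgc : ContinuousOn Dg (Set.Ici (0:ℝ)) := my_iSup_cont (fun k => (hFc k).norm)
  set Dt : ℝ → ℝ := fun u => Dg (max u 0) with hDtdef
  have hDtc : Continuous Dt :=
    hDgc.comp_continuous (continuous_id.max continuous_const) (fun u => Set.mem_Ici.mpr (le_max_right _ _))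
  have hDt_nonneg : ∀ u, 0 ≤ Dt u := by
    intro u
    have h0 : (0:ℝ) ≤ ‖F ⟨0, by omega⟩ (max u 0)‖ := norm_nonneg _
    exact h0.trans (my_le_iSup (fun k => ‖F k (max u 0)‖) _)
  have hFleDt : ∀ (k : Fin N) (u : ℝ), 0 ≤ u → ‖F k u‖ ≤ Dt u := by
    intro k u hu
    have : Dt u = Dg u := by rw [hDtdef]; simp [max_eq_left hu]
    rw [this]
    exact my_le_iSup (fun k => ‖F k u‖) k
  have hDeq : ∀ u : ℝ, 0 < u → csMaxDer v' u = Dt u := by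
    intro u hu
    have h1 : Dt u = Dg u := by rw [hDtdef]; simp [max_eq_left hu.le]
    rw [h1, hDg, csMaxDer]
    congr 1
    funext k
    rw [hFv k u hu]
  have hDint : ∀ a b : ℝ, 0 ≤ min a b →
      (∫ r in a..b, csMaxDer v' r) = ∫ r in a..b, Dt r := by
    intro a b h0
    apply my_int_congr
    intro u hu
    have h1 : min a b < u := by simpa using hu.1
    exact hDeq u (lt_of_le_of_lt h0 h1)
  -- primitive of Dt
  set J : ℝ → ℝ := fun w => ∫ p in (0:ℝ)..w, Dt p with hJdef
  have hJc : Continuous J :=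
    intervalIntegral.continuous_primitive (fun a b => hDtc.intervalIntegrable a b) 0
  have hJdiff : ∀ a b : ℝ, (∫ p in a..b, Dt p) = J b - J a := by
    intro a b
    rw [hJdef]
    exact (intervalIntegral.integral_interval_sub_left (hDtc.intervalIntegrable 0 b)
      (hDtc.intervalIntegrable 0 a)).symm
  have hJmono : ∀ a b : ℝ, a ≤ b → J a ≤ J b := by
    intro a b hab
    have h1 : 0 ≤ ∫ p in a..b, Dt p :=
      intervalIntegral.integral_nonneg hab (fun u _ => hDt_nonneg u)
    rw [hJdiff] at h1
    linarith
  -- the tail term of csG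
  set It : ℝ → ℝ :=
    fun w => ∫ s in (max 0 (w - 2*τ))..w, Real.exp (-(w - s)) * (J w - J s) with hItdef
  set K2 : ℝ → ℝ := fun w => ∫ p in (0:ℝ)..w, Real.exp p * J p with hK2def
  have hK2c : Continuous K2 :=
    intervalIntegral.continuous_primitive
      (fun a b => (Real.continuous_exp.mul hJc).intervalIntegrable a b) 0
  have hK2diff : ∀ a b : ℝ, (∫ p in a..b, Real.exp p * J p) = K2 b - K2 a := by
    intro a b
    rw [hK2def]
    exact (intervalIntegral.integral_interval_sub_left
      ((Real.continuous_exp.mul hJc).intervalIntegrable 0 b)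
      ((Real.continuous_exp.mul hJc).intervalIntegrable 0 a)).symm
  have hItrepr : ∀ w, It w = Real.exp (-w) * (J w * (Real.exp w - Real.exp (max 0 (w - 2*τ)))
      - (K2 w - K2 (max 0 (w - 2*τ)))) := by
    intro w
    simp only [hItdef]
    have h1 : (fun s => Real.exp (-(w - s)) * (J w - J s)) =
        (fun s => Real.exp (-w) * (Real.exp s * J w - Real.exp s * J s)) := by
      funext s
      rw [show -(w - s) = s + (-w) by ring, Real.exp_add]
      ring
    rw [h1]
    rw [intervalIntegral.integral_const_mul]
    congr 1
    rw [intervalIntegral.integral_sub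
      ((Real.continuous_exp.fun_mul continuous_const).intervalIntegrable _ _)
      ((Real.continuous_exp.fun_mul hJc).intervalIntegrable _ _)]
    rw [intervalIntegral.integral_mul_const, integral_exp, hK2diff]
    ring
  have hItc : Continuous It := by
    have : It = fun w => Real.exp (-w) * (J w * (Real.exp w - Real.exp (max 0 (w - 2*τ)))
        - (K2 w - K2 (max 0 (w - 2*τ)))) := funext hItrepr
    rw [this]
    have hm : Continuous (fun w : ℝ => max 0 (w - 2*τ)) :=
      continuous_const.max (continuous_id.sub continuous_const)
    exact (Real.continuous_exp.comp continuous_neg).mul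
      ((hJc.mul (Real.continuous_exp.sub (Real.continuous_exp.comp hm))).sub
        (hK2c.sub (hK2c.comp hm)))
  have hIt_nonneg : ∀ w, 0 ≤ w → 0 ≤ It w := by
    intro w hw
    have hmw : max 0 (w - 2*τ) ≤ w := max_le hw (by linarith)
    rw [hItdef]
    apply intervalIntegral.integral_nonneg hmw
    intro u hu
    exact mul_nonneg (Real.exp_pos _).le (sub_nonneg.2 (hJmono u w hu.2))
  set CD : ℝ → ℝ := csDiam v with hCDdef
  have hGrepr : ∀ w : ℝ, 0 ≤ w → csG β τ v v' w = CD w + β * It w := by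
    intro w hw
    have hmw : max 0 (w - 2*τ) ≤ w := max_le hw (by linarith)
    rw [csG, hCDdef, hItdef]
    congr 2
    apply intervalIntegral.integral_congr
    intro s0 hs0
    rw [Set.uIcc_of_le hmw] at hs0
    have h0 : (0:ℝ) ≤ s0 := le_trans (le_max_left _ _) hs0.1
    simp only
    congr 1
    rw [hDint s0 w (by rw [min_eq_left hs0.2]; exact h0), hJdiff]
  have hCDc : ContinuousOn CD (Set.Ici (-τ)) := by
    rw [hCDdef]
    unfold csDiam
    exact my_iSup_cont (fun k => my_iSup_cont (fun l => ((hvc k).sub (hvc l)).norm))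
  have hCD_le : ∀ (a b : Fin N) (u : ℝ), ‖v a u - v b u‖ ≤ CD u := by
    intro a b u
    rw [hCDdef]
    unfold csDiam
    exact le_trans (my_le_iSup (fun l => ‖v a u - v l u‖) b)
      (my_le_iSup (fun k => ⨆ l, ‖v k u - v l u‖) a)
  have hCD_nonneg : ∀ u, 0 ≤ CD u := by
    intro u
    have := hCD_le ⟨0, by omega⟩ ⟨0, by omega⟩ u
    simpa using this
  set Cf : ℝ → ℝ := fun w => CD w + β * It w with hCfdef
  have hCfc : ContinuousOn Cf (Set.Ici (-τ)) :=
    hCDc.add ((continuous_const.mul hItc).continuousOn)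
  have hCD_le_Cf : ∀ w : ℝ, 0 ≤ w → CD w ≤ Cf w := by
    intro w hw
    rw [hCfdef]
    simp only
    nlinarith [hIt_nonneg w hw]
  set Cs : ℝ → ℝ := fun p => Cf (max (p - τ) 0) with hCsdef
  have hCsc : Continuous Cs := by
    rw [hCsdef]
    apply hCfc.comp_continuous ((continuous_id.sub continuous_const).max continuous_const)
    intro u
    simp only [Set.mem_Ici, id_eq]
    exact le_trans (by linarith) (le_max_right _ _)
  have hCs_eq : ∀ p : ℝ, τ ≤ p → Cs p = Cf (p - τ) := by
    intro p hp
    rw [hCsdef]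
    simp [max_eq_left (by linarith : (0:ℝ) ≤ p - τ)]
  set F2 : ℝ → ℝ := fun w => ∫ p in (0:ℝ)..w, Cs p with hF2def
  -- FTC bound on a single agent's velocity increment
  have hvint : ∀ (k : Fin N) (a b : ℝ), 0 ≤ min a b → IntervalIntegrable (v' k) volume a b := by
    intro k a b h0
    apply my_intInt_congr (g := F k)
    · intro u hu
      have h1 : min a b < u := by simpa using hu.1
      exact hFv k u (lt_of_le_of_lt h0 h1)
    · apply ContinuousOn.intervalIntegrable
      apply (hFc k).mono
      intro u hu
      rcases Set.mem_uIcc.mp hu with ⟨h1, _⟩ | ⟨h1, _⟩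
      · exact Set.mem_Ici.mpr (h0.trans ((min_le_left a b).trans h1))
      · exact Set.mem_Ici.mpr (h0.trans ((min_le_right a b).trans h1))
  -- increment of a single agent's velocity bounded by the integral of the norm of its derivative
  have hincr : ∀ (a b : ℝ), 0 ≤ a → a ≤ b →
      ‖v i a - v i b‖ ≤ ∫ u in a..b, ‖v' i u‖ := by
    intro a b ha hab
    have hmin : (0:ℝ) ≤ min a b := by rw [min_eq_left hab]; exact ha
    have hftc2 : (∫ u in a..b, v' i u) = v i b - v i a := by
      apply intervalIntegral.integral_eq_sub_of_hasDeriv_right_of_le hab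
      · exact (hvc i).mono (fun u hu => Set.mem_Ici.mpr (le_trans (by linarith [hτ.le]) hu.1))
      · intro u hu
        exact (hvder i u (lt_of_le_of_lt ha hu.1)).hasDerivWithinAt
      · exact hvint i a b hmin
    have h1 : ‖v i a - v i b‖ = ‖∫ u in a..b, v' i u‖ := by
      rw [hftc2, norm_sub_rev]
    rw [h1]
    exact intervalIntegral.norm_integral_le_integral_norm hab
  -- pointwise bound on the derivative via the ODE
  have hode_bound : ∀ u : ℝ, 0 < u →
      ‖v' i u‖ ≤ CD (u - τ) + ‖v i (u - τ) - v i (u - σ)‖ := by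
    intro u hu
    rw [hode i u hu]
    set M := CD (u - τ) + ‖v i (u - τ) - v i (u - σ)‖ with hM
    have hM0 : 0 ≤ M := by
      rw [hM]
      have := hCD_nonneg (u - τ)
      positivity
    have hterm : ∀ k ∈ Finset.univ.erase i,
        ‖(ψ ‖x i (u - σ) - x k (u - τ)‖ / ((N:ℝ) - 1)) • (v k (u - τ) - v i (u - σ))‖
          ≤ M / ((N:ℝ) - 1) := by
      intro k _
      rw [norm_smul]
      have hc0 : 0 ≤ ψ ‖x i (u - σ) - x k (u - τ)‖ / ((N:ℝ) - 1) :=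
        div_nonneg (hψpos _ (norm_nonneg _)).le (by linarith)
      have hc1 : ψ ‖x i (u - σ) - x k (u - τ)‖ / ((N:ℝ) - 1) ≤ 1 / ((N:ℝ) - 1) := by
        exact (div_le_div_iff_of_pos_right (by linarith : (0:ℝ) < (N:ℝ) - 1)).mpr
          (hψbdd _ (norm_nonneg _))
      have hw : ‖v k (u - τ) - v i (u - σ)‖ ≤ M := by
        calc ‖v k (u - τ) - v i (u - σ)‖
            ≤ ‖v k (u - τ) - v i (u - τ)‖ + ‖v i (u - τ) - v i (u - σ)‖ :=
              norm_sub_le_norm_sub_add_norm_sub _ _ _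
          _ ≤ M := by rw [hM]; gcongr; exact hCD_le k i (u - τ)
      calc ‖ψ ‖x i (u - σ) - x k (u - τ)‖ / ((N:ℝ) - 1)‖ * ‖v k (u - τ) - v i (u - σ)‖
          = (ψ ‖x i (u - σ) - x k (u - τ)‖ / ((N:ℝ) - 1)) * ‖v k (u - τ) - v i (u - σ)‖ := by
            rw [Real.norm_eq_abs, abs_of_nonneg hc0]
        _ ≤ (1 / ((N:ℝ) - 1)) * M :=
            mul_le_mul hc1 hw (norm_nonneg _) (by positivity)
        _ = M / ((N:ℝ) - 1) := by ring
    have hcard : ((Finset.univ.erase i).card : ℝ) = (N:ℝ) - 1 := by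
      rw [Finset.card_erase_of_mem (Finset.mem_univ i), Finset.card_univ, Fintype.card_fin]
      rw [Nat.cast_sub (by omega), Nat.cast_one]
    calc ‖∑ k ∈ Finset.univ.erase i,
          (ψ ‖x i (u - σ) - x k (u - τ)‖ / ((N:ℝ) - 1)) • (v k (u - τ) - v i (u - σ))‖
        ≤ ∑ k ∈ Finset.univ.erase i, (M / ((N:ℝ) - 1)) := norm_sum_le_of_le _ hterm
      _ = ((Finset.univ.erase i).card : ℝ) * (M / ((N:ℝ) - 1)) := by
          rw [Finset.sum_const, nsmul_eq_mul]
      _ = M := by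
          rw [hcard]
          field_simp
  -- the main pointwise bound on the integrand
  have hbound : ∀ s ∈ Set.Icc (2*τ) t,
      ‖v j (s - τ) - v i (s - σ)‖ ≤ csG β τ v v' (s - τ)
        + β⁻¹ * Real.exp (2 * τ) * csG β τ v v' (s - σ)
        + ∫ r in (s - τ)..(s - σ), csG β τ v v' (r - τ) := by
    intro s hs
    obtain ⟨hs1, hs2⟩ := hs
    have hsτ : (0:ℝ) < s - τ := by linarith
    have hab : s - τ ≤ s - σ := by linarith
    have ha0 : (0:ℝ) ≤ s - 2*τ := by linarith
    -- step: pointwise bound on ‖v' i u‖ on the inner interval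
    have hstep : ∀ u ∈ Set.Icc (s - τ) (s - σ),
        ‖v' i u‖ ≤ CD (u - τ) + (J (u - σ) - J (u - τ)) := by
      intro u hu
      have hu0 : (0:ℝ) < u := lt_of_lt_of_le hsτ hu.1
      have huτ : (0:ℝ) ≤ u - τ := by
        have := hu.1; linarith
      have huσ : u - τ ≤ u - σ := by linarith
      have hA : ‖v i (u - τ) - v i (u - σ)‖ ≤ J (u - σ) - J (u - τ) := by
        refine (hincr (u - τ) (u - σ) huτ huσ).trans ?_
        have e1 : (∫ r in (u - τ)..(u - σ), ‖v' i r‖) = ∫ r in (u - τ)..(u - σ), ‖F i r‖ := by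
          apply my_int_congr
          intro r hr
          have h1 : min (u - τ) (u - σ) < r := by simpa using hr.1
          rw [min_eq_left huσ] at h1
          simp only
          rw [hFv i r (lt_of_le_of_lt huτ h1)]
        rw [e1, ← hJdiff]
        apply intervalIntegral.integral_mono_on huσ
        · apply ContinuousOn.intervalIntegrable
          apply ((hFc i).norm).mono
          rw [Set.uIcc_of_le huσ]
          exact fun r hr => Set.mem_Ici.mpr (huτ.trans hr.1)
        · exact hDtc.intervalIntegrable _ _
        · intro r hr
          exact hFleDt i r (huτ.trans hr.1)
      have := hode_bound u hu0
      linarith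
    -- integrate the step bound
    have hconts : ContinuousOn (fun u => CD (u - τ) + (J (u - σ) - J (u - τ)))
        (Set.uIcc (s - τ) (s - σ)) := by
      rw [Set.uIcc_of_le hab]
      apply ContinuousOn.add
      · apply hCDc.comp ((continuous_id.sub continuous_const).continuousOn)
        intro u hu
        have := hu.1
        simp only [Set.mem_Ici, Pi.sub_apply, id_eq]
        linarith
      · exact ((hJc.comp (continuous_id.sub continuous_const)).sub
          (hJc.comp (continuous_id.sub continuous_const))).continuousOn
    have h4 : (∫ u in (s - τ)..(s - σ), ‖v' i u‖)
        ≤ ∫ u in (s - τ)..(s - σ), (CD (u - τ) + (J (u - σ) - J (u - τ))) := by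
      have e1 : (∫ u in (s - τ)..(s - σ), ‖v' i u‖) = ∫ u in (s - τ)..(s - σ), ‖F i u‖ := by
        apply my_int_congr
        intro r hr
        have h1 : min (s - τ) (s - σ) < r := by simpa using hr.1
        rw [min_eq_left hab] at h1
        simp only
        rw [hFv i r (hsτ.trans h1)]
      rw [e1]
      apply intervalIntegral.integral_mono_on hab
      · apply ContinuousOn.intervalIntegrable
        apply ((hFc i).norm).mono
        rw [Set.uIcc_of_le hab]
        exact fun r hr => Set.mem_Ici.mpr (hsτ.le.trans hr.1)
      · exact hconts.intervalIntegrable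
      · intro u hu
        have hu0 : (0:ℝ) < u := lt_of_lt_of_le hsτ hu.1
        rw [← hFv i u hu0]
        exact hstep u hu
    have h5 : (∫ u in (s - τ)..(s - σ), (CD (u - τ) + (J (u - σ) - J (u - τ))))
        = (∫ u in (s - τ)..(s - σ), CD (u - τ))
          + ∫ u in (s - τ)..(s - σ), (J (u - σ) - J (u - τ)) := by
      apply intervalIntegral.integral_add
      · apply ContinuousOn.intervalIntegrable
        rw [Set.uIcc_of_le hab]
        apply hCDc.comp ((continuous_id.sub continuous_const).continuousOn)
        intro u hu
        have := hu.1
        simp only [Set.mem_Ici, Pi.sub_apply, id_eq]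
        linarith
      · exact ((hJc.comp (continuous_id.sub continuous_const)).sub
          (hJc.comp (continuous_id.sub continuous_const))).continuousOn.intervalIntegrable
    -- bound the CD-part by the csG-integral
    have h6 : (∫ u in (s - τ)..(s - σ), CD (u - τ))
        ≤ ∫ r in (s - τ)..(s - σ), csG β τ v v' (r - τ) := by
      have e1 : (∫ r in (s - τ)..(s - σ), csG β τ v v' (r - τ))
          = ∫ r in (s - τ)..(s - σ), Cs r := by
        apply intervalIntegral.integral_congr
        intro r hr
        rw [Set.uIcc_of_le hab] at hr
        have hrτ : (0:ℝ) ≤ r - τ := by have := hr.1; linarith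
        simp only
        rw [hGrepr (r - τ) hrτ, hCs_eq r (by linarith)]
      rw [e1]
      apply intervalIntegral.integral_mono_on hab
      · apply ContinuousOn.intervalIntegrable
        rw [Set.uIcc_of_le hab]
        apply hCDc.comp ((continuous_id.sub continuous_const).continuousOn)
        intro u hu
        have := hu.1
        simp only [Set.mem_Ici, Pi.sub_apply, id_eq]
        linarith
      · exact hCsc.intervalIntegrable _ _
      · intro u hu
        have huτ : (0:ℝ) ≤ u - τ := by have := hu.1; linarith
        rw [hCs_eq u (by linarith)]
        exact hCD_le_Cf (u - τ) huτ
    -- bound the J-part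
    have h7 : (∫ u in (s - τ)..(s - σ), (J (u - σ) - J (u - τ)))
        ≤ β⁻¹ * Real.exp (2 * τ) * csG β τ v v' (s - σ) := by
      have hw0 : (0:ℝ) ≤ s - σ := by linarith
      have step1 : (∫ u in (s - τ)..(s - σ), (J (u - σ) - J (u - τ)))
          ≤ ∫ u in (s - τ)..(s - σ), (J (s - σ) - J (u - τ)) := by
        apply intervalIntegral.integral_mono_on hab
        · exact ((hJc.comp (continuous_id.sub continuous_const)).sub
            (hJc.comp (continuous_id.sub continuous_const))).continuousOn.intervalIntegrable
        · exact (continuous_const.sub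
            (hJc.comp (continuous_id.sub continuous_const))).continuousOn.intervalIntegrable
        · intro u hu
          have h1 : u - σ ≤ s - σ := by have := hu.2; linarith
          have := hJmono (u - σ) (s - σ) h1
          linarith
      have step2 : (∫ u in (s - τ)..(s - σ), (J (s - σ) - J (u - τ)))
          = ∫ p in (s - 2*τ)..(s - σ - τ), (J (s - σ) - J p) := by
        have h1 := intervalIntegral.integral_comp_sub_right
          (a := s - τ) (b := s - σ) (fun p => J (s - σ) - J p) τ
        rw [h1, show s - τ - τ = s - 2*τ by ring]
      have step3 : (∫ p in (s - 2*τ)..(s - σ - τ), (J (s - σ) - J p))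
          ≤ Real.exp (2*τ) * ∫ p in (s - 2*τ)..(s - σ - τ),
              Real.exp (-(s - σ - p)) * (J (s - σ) - J p) := by
        rw [← intervalIntegral.integral_const_mul]
        apply intervalIntegral.integral_mono_on (by linarith)
        · exact (continuous_const.sub hJc).continuousOn.intervalIntegrable
        · exact Continuous.intervalIntegrable (by fun_prop) _ _
        · intro p hp
          have h1 : 0 ≤ J (s - σ) - J p :=
            sub_nonneg.2 (hJmono p (s - σ) (by have := hp.2; linarith))
          have h2 : (1:ℝ) ≤ Real.exp (2*τ) * Real.exp (-(s - σ - p)) := by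
            rw [← Real.exp_add]
            apply Real.one_le_exp
            have := hp.1
            linarith
          calc J (s - σ) - J p = 1 * (J (s - σ) - J p) := (one_mul _).symm
            _ ≤ (Real.exp (2*τ) * Real.exp (-(s - σ - p))) * (J (s - σ) - J p) :=
                mul_le_mul_of_nonneg_right h2 h1
            _ = Real.exp (2*τ) * (Real.exp (-(s - σ - p)) * (J (s - σ) - J p)) := by ring
      have step4 : (∫ p in (s - 2*τ)..(s - σ - τ),
            Real.exp (-(s - σ - p)) * (J (s - σ) - J p)) ≤ It (s - σ) := by
        rw [hItdef]
        apply my_integral_nonneg_mono_set (max_le ha0 (by linarith)) (by linarith) (by linarith)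
        · intro p hp
          exact mul_nonneg (Real.exp_pos _).le (sub_nonneg.2 (hJmono p (s - σ) hp.2))
        · exact Continuous.intervalIntegrable (by fun_prop) _ _
      have final : It (s - σ) ≤ β⁻¹ * csG β τ v v' (s - σ) := by
        rw [hGrepr (s - σ) hw0]
        have h1 := hCD_nonneg (s - σ)
        rw [mul_add]
        have h2 : β⁻¹ * (β * It (s - σ)) = It (s - σ) := by
          field_simp
        rw [h2]
        have h3 : 0 ≤ β⁻¹ := inv_nonneg.2 hβ.le
        nlinarith
      calc (∫ u in (s - τ)..(s - σ), (J (u - σ) - J (u - τ)))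
          ≤ Real.exp (2*τ) * ∫ p in (s - 2*τ)..(s - σ - τ),
              Real.exp (-(s - σ - p)) * (J (s - σ) - J p) := by
            rw [← step2] at step3
            exact step1.trans step3
        _ ≤ Real.exp (2*τ) * It (s - σ) :=
            mul_le_mul_of_nonneg_left step4 (Real.exp_pos _).le
        _ ≤ Real.exp (2*τ) * (β⁻¹ * csG β τ v v' (s - σ)) :=
            mul_le_mul_of_nonneg_left final (Real.exp_pos _).le
        _ = β⁻¹ * Real.exp (2 * τ) * csG β τ v v' (s - σ) := by ring
    -- the first term
    have h8 : CD (s - τ) ≤ csG β τ v v' (s - τ) := by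
      rw [hGrepr (s - τ) hsτ.le]
      nlinarith [hIt_nonneg (s - τ) hsτ.le]
    -- triangle inequality
    have htri : ‖v j (s - τ) - v i (s - σ)‖
        ≤ CD (s - τ) + ‖v i (s - τ) - v i (s - σ)‖ := by
      calc ‖v j (s - τ) - v i (s - σ)‖
          ≤ ‖v j (s - τ) - v i (s - τ)‖ + ‖v i (s - τ) - v i (s - σ)‖ :=
            norm_sub_le_norm_sub_add_norm_sub _ _ _
        _ ≤ CD (s - τ) + ‖v i (s - τ) - v i (s - σ)‖ := by
            gcongr
            exact hCD_le j i (s - τ)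
    have h2' : ‖v i (s - τ) - v i (s - σ)‖ ≤ ∫ u in (s - τ)..(s - σ), ‖v' i u‖ :=
      hincr (s - τ) (s - σ) hsτ.le hab
    linarith
  -- FTC for the positions
  have hgder : ∀ s ∈ Set.uIcc (2*τ) t,
      HasDerivAt (fun s => x j (s - τ) - x i (s - σ)) (v j (s - τ) - v i (s - σ)) s := by
    intro s hs
    rw [Set.uIcc_of_le ht] at hs
    have h1 : HasDerivAt (fun s => x j (s - τ)) (v j (s - τ)) s := by
      have := (hxder j (s - τ) (by have := hs.1; linarith)).scomp s
        ((hasDerivAt_id s).sub_const τ)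
      simpa [Function.comp_def] using this
    have h2 : HasDerivAt (fun s => x i (s - σ)) (v i (s - σ)) s := by
      have := (hxder i (s - σ) (by have := hs.1; linarith)).scomp s
        ((hasDerivAt_id s).sub_const σ)
      simpa [Function.comp_def] using this
    exact h1.sub h2
  have hφc : ContinuousOn (fun s => v j (s - τ) - v i (s - σ)) (Set.uIcc (2*τ) t) := by
    rw [Set.uIcc_of_le ht]
    apply ContinuousOn.sub
    · apply (hvc j).comp ((continuous_id.sub continuous_const).continuousOn)
      intro s hs
      have := hs.1
      simp only [Set.mem_Ici, Pi.sub_apply, id_eq]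
      linarith
    · apply (hvc i).comp ((continuous_id.sub continuous_const).continuousOn)
      intro s hs
      have := hs.1
      simp only [Set.mem_Ici, Pi.sub_apply, id_eq]
      linarith
  have hφint : IntervalIntegrable (fun s => v j (s - τ) - v i (s - σ)) volume (2*τ) t :=
    hφc.intervalIntegrable
  have hftc := intervalIntegral.integral_eq_sub_of_hasDerivAt hgder hφint
  -- integrability of the bound H
  have hHeq : ∀ s ∈ Set.Icc (2*τ) t,
      (csG β τ v v' (s - τ) + β⁻¹ * Real.exp (2 * τ) * csG β τ v v' (s - σ)
        + ∫ r in (s - τ)..(s - σ), csG β τ v v' (r - τ))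
      = Cf (s - τ) + β⁻¹ * Real.exp (2 * τ) * Cf (s - σ) + (F2 (s - σ) - F2 (s - τ)) := by
    intro s hs
    obtain ⟨hs1, hs2⟩ := hs
    have hab : s - τ ≤ s - σ := by linarith
    have e1 : (∫ r in (s - τ)..(s - σ), csG β τ v v' (r - τ))
        = ∫ r in (s - τ)..(s - σ), Cs r := by
      apply intervalIntegral.integral_congr
      intro r hr
      rw [Set.uIcc_of_le hab] at hr
      have hrτ : (0:ℝ) ≤ r - τ := by have := hr.1; linarith
      simp only
      rw [hGrepr (r - τ) hrτ, hCs_eq r (by linarith)]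
    rw [e1, hGrepr (s - τ) (by linarith), hGrepr (s - σ) (by linarith)]
    rw [hF2def]
    simp only
    rw [← intervalIntegral.integral_interval_sub_left (hCsc.intervalIntegrable 0 (s - σ))
      (hCsc.intervalIntegrable 0 (s - τ))]
  have hHcont : ContinuousOn (fun s => Cf (s - τ) + β⁻¹ * Real.exp (2 * τ) * Cf (s - σ)
      + (F2 (s - σ) - F2 (s - τ))) (Set.Icc (2*τ) t) := by
    have hF2c : Continuous F2 := by
      rw [hF2def]
      exact intervalIntegral.continuous_primitive (fun a b => hCsc.intervalIntegrable a b) 0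
    apply ContinuousOn.add
    apply ContinuousOn.add
    · apply hCfc.comp ((continuous_id.sub continuous_const).continuousOn)
      intro s hs
      have := hs.1
      simp only [Set.mem_Ici, Pi.sub_apply, id_eq]
      linarith
    · apply ContinuousOn.mul continuousOn_const
      apply hCfc.comp ((continuous_id.sub continuous_const).continuousOn)
      intro s hs
      have := hs.1
      simp only [Set.mem_Ici, Pi.sub_apply, id_eq]
      linarith
    · exact ((hF2c.comp (continuous_id.sub continuous_const)).sub
        (hF2c.comp (continuous_id.sub continuous_const))).continuousOn
  have hHint : IntervalIntegrable (fun s => csG β τ v v' (s - τ)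
      + β⁻¹ * Real.exp (2 * τ) * csG β τ v v' (s - σ)
      + ∫ r in (s - τ)..(s - σ), csG β τ v v' (r - τ)) volume (2*τ) t := by
    apply my_intInt_congr (g := fun s => Cf (s - τ) + β⁻¹ * Real.exp (2 * τ) * Cf (s - σ)
      + (F2 (s - σ) - F2 (s - τ)))
    · intro s hs
      apply hHeq
      rw [Set.uIoc_of_le ht] at hs
      exact ⟨hs.1.le, hs.2⟩
    · apply ContinuousOn.intervalIntegrable
      rw [Set.uIcc_of_le ht]
      exact hHcont
  -- final assembly
  have hkey : x j (t - τ) - x i (t - σ)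
      = (x j τ - x i (2 * τ - σ)) + ∫ s in (2*τ)..t, (v j (s - τ) - v i (s - σ)) := by
    rw [hftc]
    have e1 : (2:ℝ) * τ - τ = τ := by ring
    rw [e1]
    abel
  calc ‖x j (t - τ) - x i (t - σ)‖
      ≤ ‖x j τ - x i (2 * τ - σ)‖ + ‖∫ s in (2*τ)..t, (v j (s - τ) - v i (s - σ))‖ := by
        rw [hkey]
        exact norm_add_le _ _
    _ ≤ ‖x j τ - x i (2 * τ - σ)‖ + ∫ s in (2*τ)..t, ‖v j (s - τ) - v i (s - σ)‖ := by
        gcongr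
        exact intervalIntegral.norm_integral_le_integral_norm ht
    _ ≤ ‖x j τ - x i (2 * τ - σ)‖ + ∫ s in (2*τ)..t,
          (csG β τ v v' (s - τ) + β⁻¹ * Real.exp (2 * τ) * csG β τ v v' (s - σ)
            + ∫ r in (s - τ)..(s - σ), csG β τ v v' (r - τ)) := by
        gcongr with ss
        exact intervalIntegral.integral_mono_on ht hφint.norm hHint hbound
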